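/- For any affine alpha(l) in l with alpha(l) nonzero for 0 <= l <= k, and any complex tau: sum over l=0..k of [alpha(0)/alpha(l)] * C(tau - alpha(l), k-l) * C(alpha(l), l) equals C(tau, k). -/

import Mathlib

open Finset

noncomputable def gchoose (x : ℂ) (j : ℕ) : ℂ :=
  (∏ i ∈ Finset.range j, (x - (i : ℂ))) / (j.factorial : ℂ)

lemma gchoose_zero (x : ℂ) : gchoose x 0 = 1 := by simp [gchoose]

lemma factorial_ne (n : ℕ) : ((n.factorial : ℂ)) ≠ 0 := by
  exact_mod_cast Nat.cast_ne_zero.mpr (Nat.factorial_ne_zero n)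

lemma gPascal (x : ℂ) (n : ℕ) :
    gchoose (x+1) (n+1) = gchoose x (n+1) + gchoose x n := by
  have hP : ∏ i ∈ Finset.range (n+1), (x + 1 - (i:ℂ))
      = (∏ i ∈ Finset.range n, (x - (i:ℂ))) * (x+1) := by
    rw [Finset.prod_range_succ']
    congr 1
    · apply Finset.prod_congr rfl; intro i _; push_cast; ring
    · push_cast; ring
  have hQ : ∏ i ∈ Finset.range (n+1), (x - (i:ℂ))
      = (∏ i ∈ Finset.range n, (x - (i:ℂ))) * (x - n) := Finset.prod_range_succ _ _
  unfold gchoose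
  rw [hP, hQ, Nat.factorial_succ]
  have h0 : ((n.factorial : ℂ)) ≠ 0 := factorial_ne n
  have h1 : ((n:ℂ) + 1) ≠ 0 := by
    have := Nat.cast_add_one_ne_zero (R := ℂ) n
    exact_mod_cast this
  push_cast
  field_simp
  ring

/-- The Rothe/Gould weight `B/(B+Al) * C(B+Al, l)` as an honest polynomial expression. -/
noncomputable def w (A B : ℂ) : ℕ → ℂ
  | 0 => 1
  | (m+1) => B * (∏ i ∈ Finset.range m, (B + (A*(m+1) - (i+1)))) / ((m+1).factorial : ℂ)

lemma w_B0 (A : ℂ) (m : ℕ) : w A 0 (m+1) = 0 := by simp [w]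

lemma wPascal (A B : ℂ) (m : ℕ) :
    w A (B+1) (m+1) = w A B (m+1) + w A (B+A) m := by
  cases m with
  | zero => simp [w]
  | succ s =>
    have hfact : (((s+2).factorial : ℂ)) = ((s:ℂ)+2) * ((s+1).factorial : ℂ) := by
      rw [Nat.factorial_succ]; push_cast; ring
    simp only [w]
    set R := ∏ i ∈ Finset.range s, (B + (A*((s:ℂ)+1+1) - ((i:ℂ)+1))) with hR
    have h1 : ∏ i ∈ Finset.range (s+1), ((B+1) + (A*(((s+1:ℕ):ℂ)+1) - ((i:ℂ)+1)))
        = R * (B + A*((s:ℂ)+2)) := by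
      rw [Finset.prod_range_succ']
      congr 1
      · apply Finset.prod_congr rfl; intro i _; push_cast; ring
      · push_cast; ring
    have h2 : ∏ i ∈ Finset.range (s+1), (B + (A*(((s+1:ℕ):ℂ)+1) - ((i:ℂ)+1)))
        = R * (B + (A*((s:ℂ)+2) - ((s:ℂ)+1))) := by
      rw [Finset.prod_range_succ]
      congr 1
      · apply Finset.prod_congr rfl; intro i _; push_cast; ring
      · push_cast; ring
    have h3 : ∏ i ∈ Finset.range s, ((B+A) + (A*((s:ℂ)+1) - ((i:ℂ)+1))) = R := by
      apply Finset.prod_congr rfl; intro i _; push_cast; ring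
    push_cast at h1 h2 h3 ⊢
    rw [h1, h2, h3, hfact]
    have hs1 : (((s+1).factorial : ℂ)) ≠ 0 := factorial_ne (s+1)
    have hs2 : ((s:ℂ)+2) ≠ 0 := by
      have : ((s+2 : ℕ) : ℂ) ≠ 0 := Nat.cast_ne_zero.mpr (by omega)
      push_cast at this; exact this
    field_simp
    ring

noncomputable def RH (k : ℕ) (A B τ : ℂ) : ℂ :=
  ∑ l ∈ Finset.range (k+1), w A B l * gchoose (τ - B - A*l) (k-l)

/-! ### Polynomial-function machinery -/

def IsPolyC (f : ℂ → ℂ) : Prop := ∃ p : Polynomial ℂ, ∀ x, f x = Polynomial.eval x p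

lemma isPolyC_const (c : ℂ) : IsPolyC (fun _ => c) := ⟨Polynomial.C c, by simp⟩

lemma isPolyC_X : IsPolyC (fun x => x) := ⟨Polynomial.X, by simp⟩

lemma isPolyC_add {f g : ℂ → ℂ} (hf : IsPolyC f) (hg : IsPolyC g) :
    IsPolyC (fun x => f x + g x) := by
  obtain ⟨p, hp⟩ := hf; obtain ⟨q, hq⟩ := hg
  exact ⟨p + q, fun x => by simp [hp, hq]⟩

lemma isPolyC_sub {f g : ℂ → ℂ} (hf : IsPolyC f) (hg : IsPolyC g) :
    IsPolyC (fun x => f x - g x) := by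
  obtain ⟨p, hp⟩ := hf; obtain ⟨q, hq⟩ := hg
  exact ⟨p - q, fun x => by simp [hp, hq]⟩

lemma isPolyC_mul {f g : ℂ → ℂ} (hf : IsPolyC f) (hg : IsPolyC g) :
    IsPolyC (fun x => f x * g x) := by
  obtain ⟨p, hp⟩ := hf; obtain ⟨q, hq⟩ := hg
  exact ⟨p * q, fun x => by simp [hp, hq]⟩

lemma IsPolyC.congr {f g : ℂ → ℂ} (hf : IsPolyC f) (he : ∀ x, g x = f x) : IsPolyC g := by
  obtain ⟨p, hp⟩ := hf
  exact ⟨p, fun x => (he x).trans (hp x)⟩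

lemma isPolyC_sum {ι : Type*} (s : Finset ι) (f : ι → ℂ → ℂ)
    (h : ∀ i ∈ s, IsPolyC (f i)) : IsPolyC (fun x => ∑ i ∈ s, f i x) := by
  classical
  induction s using Finset.induction_on with
  | empty => exact (isPolyC_const 0).congr (fun x => by simp)
  | @insert a s ha ih =>
      have := isPolyC_add (h a (Finset.mem_insert_self a s))
        (ih (fun i hi => h i (Finset.mem_insert_of_mem hi)))
      exact this.congr (fun x => by rw [Finset.sum_insert ha])

lemma isPolyC_prod {ι : Type*} (s : Finset ι) (f : ι → ℂ → ℂ)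
    (h : ∀ i ∈ s, IsPolyC (f i)) : IsPolyC (fun x => ∏ i ∈ s, f i x) := by
  classical
  induction s using Finset.induction_on with
  | empty => exact (isPolyC_const 1).congr (fun x => by simp)
  | @insert a s ha ih =>
      have := isPolyC_mul (h a (Finset.mem_insert_self a s))
        (ih (fun i hi => h i (Finset.mem_insert_of_mem hi)))
      exact this.congr (fun x => by rw [Finset.prod_insert ha])

lemma isPolyC_gchoose_affine (a b : ℂ) (n : ℕ) :
    IsPolyC (fun x => gchoose (a*x + b) n) := by
  refine ⟨(∏ i ∈ Finset.range n, (Polynomial.C a * Polynomial.X + Polynomial.C (b - (i:ℂ))))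
      * Polynomial.C (((n.factorial : ℂ))⁻¹), fun x => ?_⟩
  simp only [gchoose]
  rw [div_eq_mul_inv, Polynomial.eval_mul, Polynomial.eval_C, Polynomial.eval_prod]
  congr 1
  apply Finset.prod_congr rfl
  intro i _
  simp
  ring

lemma isPolyC_w (A : ℂ) (l : ℕ) : IsPolyC (fun B => w A B l) := by
  cases l with
  | zero => exact (isPolyC_const 1).congr (fun x => rfl)
  | succ m =>
      have h : IsPolyC (fun B : ℂ =>
          B * (∏ i ∈ Finset.range m, (B + (A*(m+1) - ((i:ℂ)+1)))) * (((m+1).factorial : ℂ))⁻¹) := by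
        apply isPolyC_mul
        · apply isPolyC_mul isPolyC_X
          apply isPolyC_prod
          intro i _
          exact isPolyC_add isPolyC_X (isPolyC_const _)
        · exact isPolyC_const _
      apply h.congr
      intro B
      simp only [w, div_eq_mul_inv]

lemma const_of_periodic {f : ℂ → ℂ} (hf : IsPolyC f) (hper : ∀ x, f (x + 1) = f x) :
    ∀ x, f x = f 0 := by
  obtain ⟨p, hp⟩ := hf
  have hnat : ∀ n : ℕ, f n = f 0 := by
    intro n
    induction n with
    | zero => norm_num
    | succ m ih => push_cast; rw [hper]; exact_mod_cast ih
  have hq0 : p - Polynomial.C (f 0) = 0 := by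
    apply Polynomial.eq_zero_of_infinite_isRoot
    apply Set.Infinite.mono ?_ (Set.infinite_range_of_injective (f := (Nat.cast : ℕ → ℂ))
      Nat.cast_injective)
    rintro x ⟨n, rfl⟩
    simp [Polynomial.IsRoot, ← hp, hnat n]
  have hpc : p = Polynomial.C (f 0) := by rwa [sub_eq_zero] at hq0
  intro x
  rw [hp x, hpc, Polynomial.eval_C]

/-! ### Recurrences for RH -/

lemma RH1 (k : ℕ) (A B τ : ℂ) :
    RH (k+1) A B (τ+1) = RH (k+1) A B τ + RH k A B τ := by
  unfold RH
  have hsplit : ∀ (σ : ℂ), (∑ l ∈ Finset.range (k+1+1), w A B l * gchoose (σ - B - A*l) (k+1-l))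
      = (∑ l ∈ Finset.range (k+1), w A B l * gchoose (σ - B - A*l) (k+1-l)) + w A B (k+1) := by
    intro σ
    rw [Finset.sum_range_succ]
    have h0 : k+1-(k+1) = 0 := by omega
    rw [h0, gchoose_zero, mul_one]
  rw [hsplit, hsplit]
  have key : ∀ l ∈ Finset.range (k+1),
      w A B l * gchoose (τ+1 - B - A*l) (k+1-l)
      = w A B l * gchoose (τ - B - A*l) (k+1-l) + w A B l * gchoose (τ - B - A*l) (k-l) := by
    intro l hl
    have hlk : l ≤ k := Finset.mem_range_succ_iff.mp hl
    have h1 : k+1-l = (k-l)+1 := by omega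
    have h2 : τ+1 - B - A*l = (τ - B - A*l) + 1 := by ring
    rw [h1, h2, gPascal, mul_add]
  rw [Finset.sum_congr rfl key, Finset.sum_add_distrib]
  ring

lemma RH2 (k : ℕ) (A B τ : ℂ) :
    RH (k+1) A (B+1) (τ+1) = RH (k+1) A B τ + RH k A (B+A) τ := by
  unfold RH
  rw [Finset.sum_range_succ' (fun l => w A (B+1) l * gchoose (τ+1 - (B+1) - A*l) (k+1-l)),
      Finset.sum_range_succ' (fun l => w A B l * gchoose (τ - B - A*l) (k+1-l))]
  have e0 : w A (B+1) 0 * gchoose (τ+1 - (B+1) - A*((0:ℕ):ℂ)) (k+1-0)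
      = w A B 0 * gchoose (τ - B - A*((0:ℕ):ℂ)) (k+1-0) := by
    show (1:ℂ) * _ = (1:ℂ) * _
    congr 2
    push_cast; ring
  have key : ∀ i ∈ Finset.range (k+1),
      w A (B+1) (i+1) * gchoose (τ+1 - (B+1) - A*((i+1:ℕ):ℂ)) (k+1-(i+1))
      = w A B (i+1) * gchoose (τ - B - A*((i+1:ℕ):ℂ)) (k+1-(i+1))
        + w A (B+A) i * gchoose (τ - B - A*((i+1:ℕ):ℂ)) (k+1-(i+1)) := by
    intro i hi
    have h2 : τ+1 - (B+1) - A*((i+1:ℕ):ℂ) = τ - B - A*((i+1:ℕ):ℂ) := by push_cast; ring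
    rw [h2, wPascal, add_mul]
  rw [Finset.sum_congr rfl key, Finset.sum_add_distrib]
  have hsum2 : ∑ i ∈ Finset.range (k+1), w A (B+A) i * gchoose (τ - B - A*((i+1:ℕ):ℂ)) (k+1-(i+1))
      = ∑ i ∈ Finset.range (k+1), w A (B+A) i * gchoose (τ - (B+A) - A*i) (k-i) := by
    apply Finset.sum_congr rfl
    intro i _
    have h1 : k+1-(i+1) = k-i := by omega
    have h3 : τ - B - A*((i+1:ℕ):ℂ) = τ - (B+A) - A*i := by push_cast; ring
    rw [h1, h3]
  rw [hsum2, e0]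
  ring

lemma RH_B0 (k : ℕ) (A τ : ℂ) : RH k A 0 τ = gchoose τ k := by
  unfold RH
  rw [Finset.sum_eq_single 0]
  · have h : τ - 0 - A*((0:ℕ):ℂ) = τ := by push_cast; ring
    rw [h]
    show (1:ℂ) * gchoose τ (k-0) = gchoose τ k
    simp
  · intro l _ hl
    obtain ⟨m, rfl⟩ := Nat.exists_eq_succ_of_ne_zero hl
    rw [w_B0, zero_mul]
  · intro h
    exact absurd (Finset.mem_range.mpr (Nat.succ_pos k)) h

/-! ### Main Rothe–Hagen identity -/

lemma rothe (A : ℂ) : ∀ k : ℕ, ∀ B τ : ℂ, RH k A B τ = gchoose τ k := by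
  intro k
  induction k with
  | zero =>
      intro B τ
      unfold RH
      rw [Finset.sum_range_one]
      show (1:ℂ) * gchoose (τ - B - A*((0:ℕ):ℂ)) 0 = gchoose τ 0
      rw [gchoose_zero, gchoose_zero, mul_one]
  | succ k IH =>
      intro B τ
      have h1 : ∀ (B' t : ℂ), RH (k+1) A B' (t+1) - gchoose (t+1) (k+1)
          = RH (k+1) A B' t - gchoose t (k+1) := by
        intro B' t
        rw [RH1, IH, gPascal]
        ring
      have hpolyτ : ∀ B' : ℂ, IsPolyC (fun t => RH (k+1) A B' t - gchoose t (k+1)) := by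
        intro B'
        apply isPolyC_sub
        · apply (isPolyC_sum (Finset.range (k+1+1))
            (fun l => fun t => w A B' l * gchoose (t - B' - A*l) (k+1-l)) ?_).congr
          · intro t; rfl
          · intro l _
            apply isPolyC_mul (isPolyC_const _)
            exact (isPolyC_gchoose_affine 1 (-B' - A*l) (k+1-l)).congr
              (fun x => by congr 1; ring)
        · exact (isPolyC_gchoose_affine 1 0 (k+1)).congr (fun x => by congr 1; ring)
      have hτ : ∀ (B' t : ℂ), RH (k+1) A B' t - gchoose t (k+1)
          = RH (k+1) A B' 0 - gchoose 0 (k+1) :=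
        fun B' t => const_of_periodic (hpolyτ B') (h1 B') t
      have h2 : ∀ (B' : ℂ), RH (k+1) A (B'+1) 0 - gchoose 0 (k+1)
          = RH (k+1) A B' 0 - gchoose 0 (k+1) := by
        intro B'
        rw [← hτ (B'+1) (0+1)]
        rw [RH2, IH, gPascal]
        ring
      have hpolyB : IsPolyC (fun B' => RH (k+1) A B' 0 - gchoose 0 (k+1)) := by
        apply isPolyC_sub
        · apply (isPolyC_sum (Finset.range (k+1+1))
            (fun l => fun B' => w A B' l * gchoose (0 - B' - A*l) (k+1-l)) ?_).congr
          · intro B'; rfl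
          · intro l _
            apply isPolyC_mul (isPolyC_w A l)
            exact (isPolyC_gchoose_affine (-1) (0 - A*l) (k+1-l)).congr
              (fun x => by congr 1; ring)
        · exact isPolyC_const _
      have hB : ∀ B' : ℂ, RH (k+1) A B' 0 - gchoose 0 (k+1)
          = RH (k+1) A 0 0 - gchoose 0 (k+1) :=
        fun B' => const_of_periodic hpolyB h2 B'
      have hz : RH (k+1) A 0 0 - gchoose 0 (k+1) = 0 := by rw [RH_B0]; ring
      have : RH (k+1) A B τ - gchoose τ (k+1) = 0 := by rw [hτ B τ, hB B, hz]
      exact sub_eq_zero.mp this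

lemma weight (A B : ℂ) (l : ℕ) (h : A * l + B ≠ 0) :
    B / (A*l + B) * gchoose (A*l + B) l = w A B l := by
  cases l with
  | zero =>
      have hB : A*((0:ℕ):ℂ) + B = B := by push_cast; ring
      rw [hB] at h ⊢
      rw [gchoose_zero, mul_one]
      show B / B = w A B 0
      rw [div_self h]
      rfl
  | succ m =>
      rw [gchoose, Finset.prod_range_succ']
      have hprod : ∏ i ∈ Finset.range m, (A*((m+1:ℕ):ℂ) + B - ((i:ℂ)+1))
          = ∏ i ∈ Finset.range m, (B + (A*((m:ℂ)+1) - ((i:ℂ)+1))) := by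
        apply Finset.prod_congr rfl; intro i _; push_cast; ring
      simp only [w]
      push_cast at h hprod ⊢
      rw [hprod]
      have hfac : (((m+1).factorial : ℂ)) ≠ 0 := factorial_ne (m+1)
      field_simp
      ring

theorem stmt9 (k : ℕ) (A B : ℂ)
    (hα : ∀ l : ℕ, l ≤ k → A * l + B ≠ 0)
    (τ : ℂ) :
    ∑ l ∈ Finset.range (k + 1),
      (B / (A * l + B)) * gchoose (τ - (A * l + B)) (k - l) * gchoose (A * l + B) l
      = gchoose τ k := by
  have : ∑ l ∈ Finset.range (k + 1),
      (B / (A * l + B)) * gchoose (τ - (A * l + B)) (k - l) * gchoose (A * l + B) l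
      = RH k A B τ := by
    apply Finset.sum_congr rfl
    intro l hl
    have h := hα l (Finset.mem_range_succ_iff.mp hl)
    have e1 : τ - (A*l + B) = τ - B - A*l := by ring
    rw [e1]
    calc (B / (A*l + B)) * gchoose (τ - B - A*l) (k-l) * gchoose (A*l + B) l
        = (B / (A*l + B) * gchoose (A*l + B) l) * gchoose (τ - B - A*l) (k-l) := by ring
      _ = w A B l * gchoose (τ - B - A*l) (k-l) := by rw [weight A B l h]
  rw [this, rothe]
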